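/- For the cycle corona $C_n \circ k K_1$ with $n \ge 3$ and $k \ge 1$: $\operatorname{Z}_1(C_n \circ kK_1) = k + 1$. -/

import Mathlib

open SimpleGraph

namespace ZqGame

variable {V : Type*}

/-- A blue vertex `v` forces the white vertex `w`, where only white vertices in
`Wallow` are taken into account (used for Rule 3, where play is restricted to the
subgraph induced by the blue set together with the returned white components). -/
def ForceIn (G : SimpleGraph V) (B : Set V) (Wallow : Set V) (v w : V) : Prop :=
  v ∈ B ∧ w ∉ B ∧ w ∈ Wallow ∧ G.Adj v w ∧
    ∀ u, G.Adj v u → u ∉ B → u ∈ Wallow → u = w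

/-- The standard color change rule: `v` is blue and `w` is its unique white neighbor. -/
def Force (G : SimpleGraph V) (B : Set V) (v w : V) : Prop :=
  ForceIn G B Set.univ v w

/-- The white connected component of `G - B` containing the white vertex `w`. -/
def WhiteComp (G : SimpleGraph V) (B : Set V) (w : V) : Set V :=
  {x | Relation.ReflTransGen (fun a b => G.Adj a b ∧ a ∉ B ∧ b ∉ B) w x}

/-- `W` is a white component, i.e. a connected component of `G - B`. -/
def IsWhiteComp (G : SimpleGraph V) (B : Set V) (W : Set V) : Prop :=
  ∃ w, w ∉ B ∧ W = WhiteComp G B w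

/-- An active vertex: a blue vertex with at least two white neighbors. -/
def Active (G : SimpleGraph V) (B : Set V) (a : V) : Prop :=
  a ∈ B ∧ ∃ w₁ w₂, w₁ ≠ w₂ ∧ G.Adj a w₁ ∧ G.Adj a w₂ ∧ w₁ ∉ B ∧ w₂ ∉ B

end ZqGame

namespace ZqGame

variable {V : Type*}

/-- `Win G q B t` : in the `Z_q`-forcing game on `G` starting from blue set `B`,
Blue has a strategy spending at most `t` tokens that colors every vertex blue
against any (adversarial) play by White.
* `all` : every vertex is already blue.
* `rule1` : spend one token to color an arbitrary vertex blue.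
* `rule2` : a blue vertex with exactly one white neighbor forces it, for free.
* `rule3` : Blue announces a collection `𝒲` of at least `q + 1` white components;
  for every nonempty sub-collection `𝒮` that White may return, Blue can perform a
  Rule 2 force (`vf 𝒮 → wf 𝒮`) on the subgraph induced by `B` together with `⋃ 𝒮`,
  and continue from the resulting position. -/
inductive Win (G : SimpleGraph V) (q : ℕ) : Set V → ℕ → Prop
  | all (B : Set V) (t : ℕ) : (∀ v, v ∈ B) → Win G q B t
  | rule1 (B : Set V) (t : ℕ) (v : V) : Win G q (insert v B) t → Win G q B (t + 1)
  | rule2 (B : Set V) (t : ℕ) (v w : V) :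
      Force G B v w → Win G q (insert w B) t → Win G q B t
  | rule3 (B : Set V) (t : ℕ) (𝒲 : Finset (Set V))
      (vf wf : Finset (Set V) → V) :
      (∀ W ∈ 𝒲, IsWhiteComp G B W) → q + 1 ≤ 𝒲.card →
      (∀ 𝒮 : Finset (Set V), 𝒮 ⊆ 𝒲 → 𝒮.Nonempty →
        ForceIn G B (⋃₀ (𝒮 : Set (Set V))) (vf 𝒮) (wf 𝒮)) →
      (∀ 𝒮 : Finset (Set V), 𝒮 ⊆ 𝒲 → 𝒮.Nonempty →
        Win G q (insert (wf 𝒮) B) t) →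
      Win G q B t

/-- `Z_q(G, B)` : the minimum number of additional tokens Blue must spend to win the
`Z_q`-forcing game on `G` starting from blue set `B`. -/
noncomputable def cost (G : SimpleGraph V) (q : ℕ) (B : Set V) : ℕ :=
  sInf {t | Win G q B t}

/-- `Z_q(G)` : the `Z_q`-forcing number of `G`. -/
noncomputable def Zq (G : SimpleGraph V) (q : ℕ) : ℕ := cost G q ∅

end ZqGame

namespace ZqGame

/-- Vertex type of a caterpillar cycle: `Sum.inl i` is the `i`-th center (cycle) vertex,
and `Sum.inr ⟨i, j⟩` is the `j`-th pendant leaf attached to center `i`, where center `i`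
has `f i` pendant leaves. -/
abbrev CatVert (n : ℕ) (f : Fin n → ℕ) : Type := Fin n ⊕ (Σ i : Fin n, Fin (f i))

/-- The caterpillar cycle obtained from the cycle `C_n` by attaching `f i` pendant
leaves to the `i`-th cycle vertex. -/
def catCycle (n : ℕ) (f : Fin n → ℕ) : SimpleGraph (CatVert n f) :=
  SimpleGraph.fromRel (fun x y =>
    match x, y with
    | Sum.inl i, Sum.inl j => ((i : ℕ) + 1) % n = (j : ℕ)
    | Sum.inl i, Sum.inr l => i = l.1
    | _, _ => False)

end ZqGame

open SimpleGraph
set_option linter.unusedSectionVars false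
open Fin.NatCast
open Fin.CommRing
namespace ZqGame

open Classical

section Corona

variable {n k : ℕ} [NeZero n]

abbrev CC (n k : ℕ) (i : Fin n) : CatVert n (fun _ => k) := Sum.inl i
abbrev LL (n k : ℕ) (i : Fin n) (j : Fin k) : CatVert n (fun _ => k) :=
  Sum.inr ⟨i, j⟩

lemma val_succ (i : Fin n) : ((i : ℕ) + 1) % n = ((i + 1 : Fin n) : ℕ) := by
  rw [Fin.add_def]
  show _ = ((i : ℕ) + ((1 : Fin n) : ℕ)) % n
  have h1 : ((1 : Fin n) : ℕ) = 1 % n := rfl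
  rw [h1, Nat.add_mod, Nat.mod_eq_of_lt i.isLt]

lemma succ_eq_iff {i j : Fin n} : ((i : ℕ) + 1) % n = (j : ℕ) ↔ i + 1 = j := by
  rw [val_succ, Fin.val_eq_val]

end Corona
end ZqGame
namespace ZqGame
open Classical
section Corona
variable {n k : ℕ} [NeZero n]

lemma adj_CL (i : Fin n) (j : Fin k) : (catCycle n (fun _ => k)).Adj (CC n k i) (LL n k i j) := by
  rw [catCycle, SimpleGraph.fromRel_adj]
  exact ⟨by simp [CC, LL], Or.inl rfl⟩

lemma one_ne_zero_fin (hn : 2 ≤ n) : (1 : Fin n) ≠ 0 := by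
  intro h
  have := congrArg Fin.val h
  have h1 : ((1 : Fin n) : ℕ) = 1 % n := rfl
  rw [h1] at this
  rw [Nat.mod_eq_of_lt hn, Fin.val_zero] at this
  omega

lemma succ_ne_self (hn : 2 ≤ n) (i : Fin n) : i + 1 ≠ i := by
  intro h
  have : (1 : Fin n) = 0 := by
    have := congrArg (fun x => x - i) h
    simpa [add_comm, add_sub_cancel_right] using this
  exact one_ne_zero_fin hn this

lemma adj_C_succ (hn : 2 ≤ n) (i : Fin n) :
    (catCycle n (fun _ => k)).Adj (CC n k i) (CC n k (i + 1)) := by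
  rw [catCycle, SimpleGraph.fromRel_adj]
  refine ⟨?_, Or.inl (succ_eq_iff.2 rfl)⟩
  simp only [CC, ne_eq, Sum.inl.injEq]
  exact fun h => succ_ne_self hn i h.symm

lemma adj_C_iff (hn : 2 ≤ n) (i : Fin n) (u : CatVert n (fun _ => k)) :
    (catCycle n (fun _ => k)).Adj (CC n k i) u ↔
      u = CC n k (i + 1) ∨ u = CC n k (i - 1) ∨ ∃ j, u = LL n k i j := by
  constructor
  · intro h
    rw [catCycle, SimpleGraph.fromRel_adj] at h
    obtain ⟨hne, h | h⟩ := h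
    · match u with
      | Sum.inl i' =>
        simp only at h
        exact Or.inl (by rw [← succ_eq_iff.1 h])
      | Sum.inr l =>
        simp only at h
        exact Or.inr (Or.inr ⟨l.2, by cases l; cases h; rfl⟩)
    · match u with
      | Sum.inl i' =>
        simp only at h
        refine Or.inr (Or.inl ?_)
        have : i' + 1 = i := succ_eq_iff.1 h
        rw [← this]; simp
      | Sum.inr l => simp only at h
  · rintro (rfl | rfl | ⟨j, rfl⟩)
    · exact adj_C_succ hn i
    · have := adj_C_succ hn (i - 1) (k := k)
      rw [sub_add_cancel] at this
      exact this.symm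
    · exact adj_CL i j

lemma adj_L_iff (i : Fin n) (j : Fin k) (u : CatVert n (fun _ => k)) :
    (catCycle n (fun _ => k)).Adj (LL n k i j) u ↔ u = CC n k i := by
  constructor
  · intro h
    rw [catCycle, SimpleGraph.fromRel_adj] at h
    obtain ⟨hne, h | h⟩ := h
    · match u with
      | Sum.inl i' => simp at h
      | Sum.inr l => simp at h
    · match u with
      | Sum.inl i' => simp only at h; rw [h]
      | Sum.inr l => simp at h
  · rintro rfl
    exact (adj_CL i j).symm

end Corona
end ZqGame
namespace ZqGame
open Classical
section Generic
variable {V : Type*} {G : SimpleGraph V} {B : Set V}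

/-- the white-connection relation -/
abbrev WRel (G : SimpleGraph V) (B : Set V) : V → V → Prop :=
  fun a b => G.Adj a b ∧ a ∉ B ∧ b ∉ B

lemma wrel_symm : Symmetric (WRel G B) := fun _ _ ⟨h1, h2, h3⟩ => ⟨h1.symm, h3, h2⟩

lemma mem_whiteComp_self (w : V) : w ∈ WhiteComp G B w := Relation.ReflTransGen.refl

lemma whiteComp_not_mem_B {w x : V} (hw : w ∉ B) (hx : x ∈ WhiteComp G B w) : x ∉ B := by
  induction hx with
  | refl => exact hw
  | tail _ h ih => exact h.2.2

lemma whiteComp_eq_of_mem {w x : V} (hx : x ∈ WhiteComp G B w) :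
    WhiteComp G B w = WhiteComp G B x := by
  letI : Std.Symm (WRel G B) := ⟨fun _ _ h => wrel_symm h⟩
  have hsymm : ∀ {a b : V}, Relation.ReflTransGen (WRel G B) a b →
      Relation.ReflTransGen (WRel G B) b a := fun h => Std.Symm.symm _ _ h
  ext y
  constructor
  · intro hy
    exact Relation.ReflTransGen.trans (hsymm hx) hy
  · intro hy
    exact Relation.ReflTransGen.trans hx hy

lemma whiteComp_subset_of_closed {w : V} {S : Set V} (hw : w ∈ S)
    (hcl : ∀ a b, a ∈ S → WRel G B a b → b ∈ S) :
    WhiteComp G B w ⊆ S := by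
  intro x hx
  induction hx with
  | refl => exact hw
  | tail hab h ih => exact hcl _ _ ih h

lemma isWhiteComp_disjoint {W₁ W₂ : Set V} (h1 : IsWhiteComp G B W₁)
    (h2 : IsWhiteComp G B W₂) (hne : W₁ ≠ W₂) {x : V} (hx1 : x ∈ W₁) (hx2 : x ∈ W₂) :
    False := by
  obtain ⟨w₁, hw₁, rfl⟩ := h1
  obtain ⟨w₂, hw₂, rfl⟩ := h2
  exact hne ((whiteComp_eq_of_mem hx1).trans (whiteComp_eq_of_mem hx2).symm)

/-- Win is monotone in the token count. -/
lemma Win.mono {q : ℕ} {B : Set V} {t t' : ℕ} (h : Win G q B t) (ht : t ≤ t') :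
    Win G q B t' := by
  induction h generalizing t' with
  | all B t hB => exact Win.all B t' hB
  | rule1 B t v _ ih =>
    obtain ⟨s, rfl⟩ := Nat.exists_eq_add_of_le ht
    have : t + s ≥ t := Nat.le_add_right _ _
    exact (Nat.add_right_comm t 1 s) ▸ Win.rule1 B (t + s) v (ih (by omega))
  | rule2 B t v w hf _ ih => exact Win.rule2 B t' v w hf (ih ht)
  | rule3 B t 𝒲 vf wf hW hcard hforce _ ih =>
    exact Win.rule3 B t' 𝒲 vf wf hW hcard hforce (fun 𝒮 h1 h2 => ih 𝒮 h1 h2 ht)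

lemma subset_pair {α : Type*} [DecidableEq α] {a b : α} {S : Finset α}
    (hS : S ⊆ {a, b}) (hne : S.Nonempty) : S = {a} ∨ S = {b} ∨ S = {a, b} := by
  by_cases ha : a ∈ S <;> by_cases hb : b ∈ S
  · right; right
    apply Finset.Subset.antisymm hS
    intro x hx
    simp only [Finset.mem_insert, Finset.mem_singleton] at hx
    rcases hx with rfl | rfl <;> assumption
  · left
    apply Finset.Subset.antisymm
    · intro x hx
      have := hS hx
      simp only [Finset.mem_insert, Finset.mem_singleton] at this ⊢
      rcases this with rfl | rfl
      · rfl
      · exact absurd hx hb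
    · simpa using ha
  · right; left
    apply Finset.Subset.antisymm
    · intro x hx
      have := hS hx
      simp only [Finset.mem_insert, Finset.mem_singleton] at this ⊢
      rcases this with rfl | rfl
      · exact absurd hx ha
      · rfl
    · simpa using hb
  · obtain ⟨x, hx⟩ := hne
    have := hS hx
    simp only [Finset.mem_insert, Finset.mem_singleton] at this
    rcases this with rfl | rfl
    · exact absurd hx ha
    · exact absurd hx hb

/-- Rule 3 with a pair of white components. -/
lemma win_rule3_pair {t : ℕ} {W₁ W₂ : Set V} {v₁ w₁ v₂ w₂ v₃ w₃ : V}
    (h1 : IsWhiteComp G B W₁) (h2 : IsWhiteComp G B W₂) (hne : W₁ ≠ W₂)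
    (f1 : ForceIn G B W₁ v₁ w₁) (f2 : ForceIn G B W₂ v₂ w₂)
    (f3 : ForceIn G B (W₁ ∪ W₂) v₃ w₃)
    (g1 : Win G 1 (insert w₁ B) t) (g2 : Win G 1 (insert w₂ B) t)
    (g3 : Win G 1 (insert w₃ B) t) : Win G 1 B t := by
  have hWne : W₁ ≠ W₂ := hne
  have hcard : (1 : ℕ) + 1 ≤ ({W₁, W₂} : Finset (Set V)).card := by
    rw [Finset.card_pair hWne]
  refine Win.rule3 B t {W₁, W₂}
    (fun 𝒮 => if 𝒮 = {W₁} then v₁ else if 𝒮 = {W₂} then v₂ else v₃)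
    (fun 𝒮 => if 𝒮 = {W₁} then w₁ else if 𝒮 = {W₂} then w₂ else w₃)
    ?_ hcard ?_ ?_
  · intro W hW
    simp only [Finset.mem_insert, Finset.mem_singleton] at hW
    rcases hW with rfl | rfl
    · exact h1
    · exact h2
  · intro 𝒮 hsub hne'
    rcases subset_pair hsub hne' with rfl | rfl | rfl
    · simpa using f1
    · have hne2 : ({W₂} : Finset (Set V)) ≠ {W₁} := by
        simp only [ne_eq, Finset.singleton_inj]
        exact fun h => hWne h.symm
      simpa [hne2] using f2
    · have hx : ({W₁, W₂} : Finset (Set V)) ≠ {W₁} := by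
        intro h
        have : W₂ ∈ ({W₁} : Finset (Set V)) := h ▸ (by simp)
        simp only [Finset.mem_singleton] at this
        exact hWne this.symm
      have hy : ({W₁, W₂} : Finset (Set V)) ≠ {W₂} := by
        intro h
        have : W₁ ∈ ({W₂} : Finset (Set V)) := h ▸ (by simp)
        simp only [Finset.mem_singleton] at this
        exact hWne this
      have hu : ⋃₀ (({W₁, W₂} : Finset (Set V)) : Set (Set V)) = W₁ ∪ W₂ := by
        simp
      simpa [hx, hy, hu] using f3
  · intro 𝒮 hsub hne'
    rcases subset_pair hsub hne' with rfl | rfl | rfl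
    · simpa using g1
    · have hne2 : ({W₂} : Finset (Set V)) ≠ {W₁} := by
        simp only [ne_eq, Finset.singleton_inj]
        exact fun h => hWne h.symm
      simpa [hne2] using g2
    · have hx : ({W₁, W₂} : Finset (Set V)) ≠ {W₁} := by
        intro h
        have : W₂ ∈ ({W₁} : Finset (Set V)) := h ▸ (by simp)
        simp only [Finset.mem_singleton] at this
        exact hWne this.symm
      have hy : ({W₁, W₂} : Finset (Set V)) ≠ {W₂} := by
        intro h
        have : W₁ ∈ ({W₂} : Finset (Set V)) := h ▸ (by simp)
        simp only [Finset.mem_singleton] at this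
        exact hWne this
      simpa [hx, hy] using g3

end Generic
end ZqGame
namespace ZqGame
open Classical
section Corona2
variable {n k : ℕ} [NeZero n] {B : Set (CatVert n (fun _ => k))}

local notation "G" => catCycle n (fun _ => k)

lemma whiteComp_leaf_singleton {i : Fin n} {j : Fin k}
    (hCi : CC n k i ∈ B) (hl : LL n k i j ∉ B) :
    WhiteComp G B (LL n k i j) = {LL n k i j} := by
  apply Set.Subset.antisymm
  · apply whiteComp_subset_of_closed (Set.mem_singleton _)
    intro a b ha hw
    rw [Set.mem_singleton_iff] at ha
    subst ha
    obtain ⟨hadj, hna, hnb⟩ := hw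
    rw [adj_L_iff] at hadj
    exact absurd (hadj ▸ hCi) hnb
  · rintro x (rfl : x = LL n k i j)
    exact mem_whiteComp_self _

lemma chain_walk (i : Fin n) (hn : 2 ≤ n) (s : ℕ)
    (h : ∀ r : ℕ, r ≤ s → CC n k (i + (r : Fin n)) ∉ B) :
    Relation.ReflTransGen (WRel G B) (CC n k i) (CC n k (i + (s : Fin n))) := by
  induction s with
  | zero => simpa using Relation.ReflTransGen.refl
  | succ s ih =>
    have step : WRel G B (CC n k (i + (s : Fin n))) (CC n k (i + ((s+1 : ℕ) : Fin n))) := by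
      have hc : ((s+1 : ℕ) : Fin n) = (s : Fin n) + 1 := by push_cast; ring
      refine ⟨?_, h s (by omega), h (s+1) le_rfl⟩
      rw [hc, ← add_assoc]
      exact adj_C_succ hn _
    exact Relation.ReflTransGen.tail (ih (fun r hr => h r (by omega))) step

/-- every element of a Fin n is i + s for s < n -/
lemma fin_decomp (i x : Fin n) : ∃ s : ℕ, s < n ∧ x = i + (s : Fin n) := by
  refine ⟨(x - i).val, (x - i).isLt, ?_⟩
  rw [Fin.cast_val_eq_self]
  ring

end Corona2
end ZqGame
namespace ZqGame
open Classical
set_option linter.unusedVariables false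
section Upper
variable {n k : ℕ} [NeZero n]

local notation "G" => catCycle n (fun _ => k)
local notation "V'" => CatVert n (fun _ => k)

/-- membership in the circular interval starting at `a` of length `m` -/
def InK (a : Fin n) (m : ℕ) (i : Fin n) : Prop := ∃ s : ℕ, s < m ∧ i = a + (s : Fin n)

lemma natCast_inj_of_lt {r s : ℕ} (hr : r < n) (hs : s < n)
    (h : (r : Fin n) = (s : Fin n)) : r = s := by
  have := congrArg Fin.val h
  rwa [Fin.val_natCast, Fin.val_natCast, Nat.mod_eq_of_lt hr, Nat.mod_eq_of_lt hs] at this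

lemma notInK_of {a : Fin n} {m r : ℕ} (hm : m ≤ r) (hr : r < n) :
    ¬ InK a m (a + (r : Fin n)) := by
  rintro ⟨s, hs, heq⟩
  have h2 : (r : Fin n) = (s : Fin n) := by
    have := heq
    rwa [add_right_inj] at this
  have := natCast_inj_of_lt hr (by omega) h2
  omega

lemma InK_self {a : Fin n} {m : ℕ} (hm : 0 < m) : InK a m a :=
  ⟨0, hm, by simp⟩

lemma InK_mono {a : Fin n} {m m' : ℕ} (h : m ≤ m') {i : Fin n} (hi : InK a m i) :
    InK a m' i := by
  obtain ⟨s, hs, rfl⟩ := hi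
  exact ⟨s, by omega, rfl⟩

lemma InK_succ_iff {a : Fin n} {m : ℕ} {i : Fin n} :
    InK a (m + 1) i ↔ i = a + (m : Fin n) ∨ InK a m i := by
  constructor
  · rintro ⟨s, hs, rfl⟩
    rcases Nat.lt_succ_iff_lt_or_eq.1 hs with h | rfl
    · exact Or.inr ⟨s, h, rfl⟩
    · exact Or.inl rfl
  · rintro (rfl | ⟨s, hs, rfl⟩)
    · exact ⟨m, by omega, rfl⟩
    · exact ⟨s, by omega, rfl⟩

lemma InK_all {a : Fin n} (i : Fin n) : InK a n i := by
  obtain ⟨s, hs, rfl⟩ := fin_decomp a i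
  exact ⟨s, hs, rfl⟩

lemma InK_pred_iff {a : Fin n} {m : ℕ} {i : Fin n} :
    InK (a - 1) (m + 1) i ↔ i = a - 1 ∨ InK a m i := by
  constructor
  · rintro ⟨s, hs, rfl⟩
    match s with
    | 0 => exact Or.inl (by simp)
    | s + 1 =>
      refine Or.inr ⟨s, by omega, ?_⟩
      push_cast
      ring
  · rintro (rfl | ⟨s, hs, rfl⟩)
    · exact ⟨0, by omega, by simp⟩
    · refine ⟨s + 1, by omega, ?_⟩
      push_cast
      ring

/-- the whites count -/
noncomputable def wcount (B : Set V') : ℕ := Set.ncard Bᶜ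

lemma wcount_insert_lt {B : Set V'} {w : V'} (hw : w ∉ B) :
    wcount (insert w B) < wcount B := by
  have hfin : (Bᶜ : Set V').Finite := Set.toFinite _
  rw [wcount, wcount]
  have hc : (insert w B)ᶜ = Bᶜ \ {w} := by
    ext x
    simp only [Set.mem_compl_iff, Set.mem_insert_iff, Set.mem_diff, Set.mem_singleton_iff]
    tauto
  rw [hc]
  exact Set.ncard_diff_singleton_lt_of_mem hw hfin

/-- Endgame, single parent: all cycle vertices blue, all white vertices are
leaves of `p`, and the number of whites is at most `t+1`. -/
lemma endgame_single (hn : 3 ≤ n) : ∀ N t (B : Set V') (p : Fin n),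
    (∀ i, CC n k i ∈ B) → (∀ i j, LL n k i j ∉ B → i = p) →
    wcount B ≤ N → wcount B ≤ t + 1 → Win G 1 B t := by
  intro N
  induction N with
  | zero =>
    intro t B p hC hL hN ht
    refine Win.all B t fun v => ?_
    by_contra hv
    have : Bᶜ.Nonempty := ⟨v, hv⟩
    have := Set.ncard_pos (Set.toFinite _) |>.2 this
    rw [wcount] at hN
    omega
  | succ N ih =>
    intro t B p hC hL hN ht
    by_cases hall : ∀ v, v ∈ B
    · exact Win.all B t hall
    push_neg at hall
    obtain ⟨v, hv⟩ := hall
    obtain ⟨j, hj⟩ : ∃ j, LL n k p j ∉ B := by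
      match v, hv with
      | Sum.inl i, hv => exact absurd (hC i) hv
      | Sum.inr ⟨i, j⟩, hv => exact ⟨j, by rwa [hL i j hv] at hv⟩
    by_cases huniq : ∀ j', LL n k p j' ∉ B → j' = j
    · -- rule 2 : C p forces its unique white leaf
      refine Win.rule2 B t (CC n k p) (LL n k p j) ⟨hC p, hj, trivial, adj_CL p j, ?_⟩ ?_
      · intro u hadj hu _
        rw [adj_C_iff (by omega)] at hadj
        rcases hadj with rfl | rfl | ⟨j', rfl⟩
        · exact absurd (hC _) hu
        · exact absurd (hC _) hu
        · rw [huniq j' hu]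
      · refine ih t _ p (fun i => Set.mem_insert_of_mem _ (hC i)) ?_ ?_ ?_
        · intro i j' hij'
          exact hL i j' fun hmem => hij' (Set.mem_insert_of_mem _ hmem)
        · have := wcount_insert_lt hj
          omega
        · have := wcount_insert_lt hj
          omega
    · -- two white leaves at p : pay a token
      push_neg at huniq
      obtain ⟨j', hj', hjj'⟩ := huniq
      have h2 : 2 ≤ wcount B := by
        have : 1 < (Bᶜ : Set _).ncard := by
          rw [Set.one_lt_ncard_iff (Set.toFinite _)]
          exact ⟨LL n k p j', LL n k p j, hj', hj, by simp [hjj']⟩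
        rw [wcount]
        omega
      have ht1 : 1 ≤ t := by omega
      have hwin : Win G 1 (insert (LL n k p j) B) (t - 1) := by
        refine ih (t - 1) _ p (fun i => Set.mem_insert_of_mem _ (hC i)) ?_ ?_ ?_
        · intro i j'' hij''
          exact hL i j'' fun hmem => hij'' (Set.mem_insert_of_mem _ hmem)
        · have := wcount_insert_lt hj
          omega
        · have := wcount_insert_lt hj
          omega
      have := Win.rule1 B (t - 1) (LL n k p j) hwin
      have htt : t - 1 + 1 = t := by omega
      rwa [htt] at this

/-- helper: singleton leaf white component -/
lemma isWC_leaf {B : Set V'} {p : Fin n} {j : Fin k}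
    (hCp : CC n k p ∈ B) (hj : LL n k p j ∉ B) :
    IsWhiteComp G B {LL n k p j} :=
  ⟨LL n k p j, hj, (whiteComp_leaf_singleton hCp hj).symm⟩

/-- helper: force a singleton leaf -/
lemma forceIn_leaf {B : Set V'} {p : Fin n} {j : Fin k}
    (hCp : CC n k p ∈ B) (hj : LL n k p j ∉ B) :
    ForceIn G B {LL n k p j} (CC n k p) (LL n k p j) :=
  ⟨hCp, hj, rfl, adj_CL p j, fun u _ _ hu => hu⟩

/-- Endgame: all cycle vertices blue. -/
lemma endgame (hn : 3 ≤ n) (hk : 1 ≤ k) : ∀ N (B : Set V'),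
    (∀ i, CC n k i ∈ B) → wcount B ≤ N → Win G 1 B (k - 1) := by
  intro N
  induction N with
  | zero =>
    intro B hC hN
    refine Win.all B _ fun v => ?_
    by_contra hv
    have : Bᶜ.Nonempty := ⟨v, hv⟩
    have := Set.ncard_pos (Set.toFinite _) |>.2 this
    rw [wcount] at hN
    omega
  | succ N ih =>
    intro B hC hN
    by_cases h2p : ∃ p j q j', p ≠ q ∧ LL n k p j ∉ B ∧ LL n k q j' ∉ B
    · obtain ⟨p, j, q, j', hpq, hpj, hqj⟩ := h2p
      have hLne : LL n k p j ≠ LL n k q j' := by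
        simp only [LL, ne_eq, Sum.inr.injEq]
        intro h
        exact hpq (congrArg Sigma.fst h)
      have hSne : ({LL n k p j} : Set V') ≠ {LL n k q j'} := by
        simp only [ne_eq, Set.singleton_eq_singleton_iff]
        exact hLne
      refine win_rule3_pair (isWC_leaf (hC p) hpj) (isWC_leaf (hC q) hqj)
        hSne (forceIn_leaf (hC p) hpj) (forceIn_leaf (hC q) hqj)
        ⟨hC p, hpj, Or.inl rfl, adj_CL p j, ?_⟩ ?_ ?_ ?_
      · intro u hadj hu hmem
        rcases hmem with rfl | h
        · rfl
        · exfalso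
          rw [Set.mem_singleton_iff] at h
          subst h
          rw [SimpleGraph.adj_comm, adj_L_iff] at hadj
          have hpq2 : p = q := by injection hadj
          exact hpq hpq2
      · exact ih _ (fun i => Set.mem_insert_of_mem _ (hC i))
          (by have := wcount_insert_lt hpj; omega)
      · exact ih _ (fun i => Set.mem_insert_of_mem _ (hC i))
          (by have := wcount_insert_lt hqj; omega)
      · exact ih _ (fun i => Set.mem_insert_of_mem _ (hC i))
          (by have := wcount_insert_lt hpj; omega)
    · -- all white leaves share a parent
      push_neg at h2p
      by_cases hw : ∃ p j, LL n k p j ∉ B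
      · obtain ⟨p, j, hpj⟩ := hw
        refine endgame_single hn (wcount B) (k - 1) B p hC ?_ le_rfl ?_
        · intro i j' hij'
          by_contra hne
          exact hpj (h2p i j' p j hne hij')
        · -- whites ⊆ leaves of p, so at most k of them
          have hsub : (Bᶜ : Set V') ⊆ Set.range (LL n k p) := by
            intro v hv
            match v with
            | Sum.inl i => exact absurd (hC i) hv
            | Sum.inr ⟨i, j'⟩ =>
              have : i = p := by
                by_contra hne
                exact hpj (h2p i j' p j hne hv)
              subst this
              exact ⟨j', rfl⟩
          have h1 := Set.ncard_le_ncard hsub (Set.toFinite _)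
          have h2 : (Set.range (LL n k p)).ncard ≤ k := by
            rw [← Set.image_univ]
            calc (LL n k p '' Set.univ).ncard ≤ (Set.univ : Set (Fin k)).ncard :=
                  Set.ncard_image_le (Set.toFinite _)
              _ = k := by rw [Set.ncard_univ, Nat.card_eq_fintype_card, Fintype.card_fin]
          rw [wcount]
          omega
      · push_neg at hw
        refine Win.all B _ fun v => ?_
        match v with
        | Sum.inl i => exact hC i
        | Sum.inr ⟨i, j⟩ => exact hw i j

end Upper
end ZqGame
namespace ZqGame
open Classical
set_option linter.unusedVariables false
section Upper2
variable {n k : ℕ} [NeZero n]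

local notation "G" => catCycle n (fun _ => k)
local notation "V'" => CatVert n (fun _ => k)

/-- cycle index of a vertex -/
def idx : CatVert n (fun _ => k) → Fin n
  | Sum.inl i => i
  | Sum.inr l => l.1

lemma a_ne_b {a : Fin n} {m : ℕ} (hm2 : 2 ≤ m) (hmn : m ≤ n) :
    a ≠ a + ((m - 1 : ℕ) : Fin n) := by
  intro h
  have h0 : ((m - 1 : ℕ) : Fin n) = ((0 : ℕ) : Fin n) := by
    have := h
    rw [left_eq_add] at this
    simpa using this
  have := natCast_inj_of_lt (by omega) (by omega) h0
  omega

lemma midgame (hn : 3 ≤ n) (hk : 1 ≤ k) : ∀ N (B : Set V') (a : Fin n) (m : ℕ),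
    2 ≤ m → m ≤ n →
    (∀ i, CC n k i ∈ B ↔ InK a m i) →
    (∀ i j, LL n k i j ∈ B → InK a m i) →
    wcount B ≤ N → Win G 1 B (k - 1) := by
  have hn2 : 2 ≤ n := by omega
  intro N
  induction N with
  | zero =>
    intro B a m hm2 hmn hiff hL hN
    refine Win.all _ _ fun v => ?_
    by_contra hv
    have : Bᶜ.Nonempty := ⟨v, hv⟩
    have := Set.ncard_pos (Set.toFinite _) |>.2 this
    rw [wcount] at hN
    omega
  | succ N ih =>
    intro B a m hm2 hmn hiff hL hN
    by_cases hmeq : m = n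
    · subst hmeq
      exact endgame hn hk (wcount B) B (fun i => (hiff i).2 (InK_all i)) le_rfl
    have hmlt : m < n := lt_of_le_of_ne hmn hmeq
    set b : Fin n := a + ((m - 1 : ℕ) : Fin n) with hb_def
    set next : Fin n := a + ((m : ℕ) : Fin n) with hnext_def
    set prev : Fin n := a - 1 with hprev_def
    have hcast_m : ((m : ℕ) : Fin n) = ((m - 1 : ℕ) : Fin n) + 1 := by
      conv_lhs => rw [show m = (m - 1) + 1 by omega]
      push_cast
      ring
    have hb1 : b + 1 = next := by rw [hb_def, hnext_def, hcast_m, add_assoc]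
    have hprev_eq : prev = a + ((n - 1 : ℕ) : Fin n) := by
      have : ((n - 1 : ℕ) : Fin n) = (0 : Fin n) - 1 := by
        conv_rhs => rw [show (0 : Fin n) = ((n : ℕ) : Fin n) by simp]
        rw [show ((n : ℕ) : Fin n) - 1 = ((n : ℕ) : Fin n) - ((1 : ℕ) : Fin n) by simp]
        rw [← Nat.cast_sub (by omega)]
      rw [hprev_def, this]
      ring
    have haB : CC n k a ∈ B := (hiff a).2 (InK_self (by omega))
    have hbB : CC n k b ∈ B := (hiff b).2 ⟨m - 1, by omega, rfl⟩
    have hb1B : CC n k (b - 1) ∈ B := by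
      refine (hiff _).2 ⟨m - 2, by omega, ?_⟩
      rw [hb_def]
      have : ((m - 1 : ℕ) : Fin n) = ((m - 2 : ℕ) : Fin n) + 1 := by
        conv_lhs => rw [show m - 1 = (m - 2) + 1 by omega]
        push_cast
        ring
      rw [this]
      ring
    have ha1B : CC n k (a + 1) ∈ B := by
      refine (hiff _).2 ⟨1, by omega, by simp⟩
    have hnextW : CC n k next ∉ B := fun h =>
      notInK_of le_rfl hmlt ((hiff next).1 h)
    have hprevW : CC n k prev ∉ B := fun h => by
      rw [hprev_eq] at h
      exact notInK_of (by omega) (by omega) ((hiff _).1 h)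
    have hadj_b_next : (G).Adj (CC n k b) (CC n k next) := by
      rw [← hb1]
      exact adj_C_succ hn2 b
    set bigW : Set V' := WhiteComp G B (CC n k next) with hbigW_def
    have hbigIsWC : IsWhiteComp G B bigW := ⟨CC n k next, hnextW, rfl⟩
    have hnext_mem : CC n k next ∈ bigW := mem_whiteComp_self _
    have hbig_out : ∀ x ∈ bigW, ¬ InK a m (idx x) := by
      have : bigW ⊆ {x | ¬ InK a m (idx x)} := by
        apply whiteComp_subset_of_closed
        · exact notInK_of le_rfl hmlt
        · rintro x y hx ⟨hadj, hnx, hny⟩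
          match y with
          | Sum.inl i =>
            intro hIn
            exact hny ((hiff i).2 hIn)
          | Sum.inr ⟨i, j⟩ =>
            have : x = CC n k i := by
              rw [SimpleGraph.adj_comm, adj_L_iff] at hadj
              exact hadj
            subst this
            exact hx
      exact fun x hx => this hx
    have hprev_mem : CC n k prev ∈ bigW := by
      have hwalk := chain_walk (B := B) next hn2 (n - 1 - m) ?_
      · have hend : next + ((n - 1 - m : ℕ) : Fin n) = prev := by
          rw [hnext_def, hprev_eq, add_assoc, ← Nat.cast_add,
            show m + (n - 1 - m) = n - 1 by omega]
        rw [hend] at hwalk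
        exact hwalk
      · intro r hr
        intro hmem
        have : next + ((r : ℕ) : Fin n) = a + ((m + r : ℕ) : Fin n) := by
          rw [hnext_def, add_assoc, ← Nat.cast_add]
        rw [this] at hmem
        exact notInK_of (by omega) (by omega) ((hiff _).1 hmem)
    -- the recursion target for inserting `CC next`
    have hrec_next : Win G 1 (insert (CC n k next) B) (k - 1) := by
      refine ih _ a (m + 1) (by omega) (by omega) ?_ ?_ ?_
      · intro i
        constructor
        · rintro (h | h)
          · have : i = next := by injection h
            exact InK_succ_iff.2 (Or.inl this)
          · exact InK_mono (by omega) ((hiff i).1 h)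
        · intro h
          rcases InK_succ_iff.1 h with rfl | h
          · exact Or.inl rfl
          · exact Or.inr ((hiff _).2 h)
      · intro i j hij
        rcases hij with h | h
        · exact absurd h (by simp [CC, LL])
        · exact InK_mono (by omega) (hL i j h)
      · have := wcount_insert_lt hnextW
        omega
    by_cases hwl : ∃ p j, InK a m p ∧ LL n k p j ∉ B
    · obtain ⟨p, j₀, hpK, hpj⟩ := hwl
      have hCpB : CC n k p ∈ B := (hiff p).2 hpK
      have hne : ({LL n k p j₀} : Set V') ≠ bigW := by
        intro h
        rw [← h] at hnext_mem
        simp [CC, LL] at hnext_mem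
      have f2 : ForceIn G B bigW (CC n k b) (CC n k next) := by
        refine ⟨hbB, hnextW, hnext_mem, hadj_b_next, ?_⟩
        intro u hadj hu hmem
        rw [adj_C_iff hn2] at hadj
        rcases hadj with rfl | rfl | ⟨j, rfl⟩
        · rw [hb1]
        · exact absurd hb1B hu
        · exact absurd ⟨m - 1, by omega, rfl⟩ (hbig_out _ hmem)
      have hrec_leaf : Win G 1 (insert (LL n k p j₀) B) (k - 1) := by
        refine ih _ a m hm2 hmn ?_ ?_ ?_
        · intro i
          rw [← hiff i]
          constructor
          · rintro (h | h)
            · exact absurd h (by simp [CC, LL])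
            · exact h
          · exact fun h => Or.inr h
        · intro i j hij
          rcases hij with h | h
          · have h1 : i = p := by
              simp only [LL, Sum.inr.injEq] at h
              exact congrArg Sigma.fst h
            subst h1
            exact hpK
          · exact hL i j h
        · have := wcount_insert_lt hpj
          omega
      by_cases hpb : p = b
      · -- left-end force for the combined branch
        have hpa : a ≠ p := by
          rw [hpb]
          exact a_ne_b hm2 hmn
        have hadj_a_prev : (G).Adj (CC n k a) (CC n k prev) := by
          have := adj_C_succ hn2 (n := n) (k := k) prev
          rw [hprev_def, sub_add_cancel] at this
          exact this.symm
        have f3 : ForceIn G B ({LL n k p j₀} ∪ bigW) (CC n k a) (CC n k prev) := by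
          refine ⟨haB, hprevW, Or.inr hprev_mem, hadj_a_prev, ?_⟩
          intro u hadj hu hmem
          rw [adj_C_iff hn2] at hadj
          rcases hadj with rfl | rfl | ⟨j, rfl⟩
          · exact absurd ha1B hu
          · rfl
          · rcases hmem with h | h
            · exfalso
              rw [Set.mem_singleton_iff] at h
              simp only [LL, Sum.inr.injEq] at h
              exact hpa (congrArg Sigma.fst h)
            · exact absurd (InK_self (by omega)) (hbig_out _ h)
        have hrec_prev : Win G 1 (insert (CC n k prev) B) (k - 1) := by
          refine ih _ (a - 1) (m + 1) (by omega) (by omega) ?_ ?_ ?_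
          · intro i
            constructor
            · rintro (h | h)
              · have : i = prev := by injection h
                exact InK_pred_iff.2 (Or.inl (this.trans hprev_def))
              · exact InK_pred_iff.2 (Or.inr ((hiff i).1 h))
            · intro h
              rcases InK_pred_iff.1 h with rfl | h
              · exact Or.inl (by rw [hprev_def])
              · exact Or.inr ((hiff _).2 h)
          · intro i j hij
            rcases hij with h | h
            · exact absurd h (by simp [CC, LL])
            · exact InK_pred_iff.2 (Or.inr (hL i j h))
          · have := wcount_insert_lt hprevW
            omega
        exact win_rule3_pair (isWC_leaf hCpB hpj) hbigIsWC hne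
          (forceIn_leaf hCpB hpj) f2 f3 hrec_leaf hrec_next hrec_prev
      · -- right-end force for the combined branch
        have f3 : ForceIn G B ({LL n k p j₀} ∪ bigW) (CC n k b) (CC n k next) := by
          refine ⟨hbB, hnextW, Or.inr hnext_mem, hadj_b_next, ?_⟩
          intro u hadj hu hmem
          rw [adj_C_iff hn2] at hadj
          rcases hadj with rfl | rfl | ⟨j, rfl⟩
          · rw [hb1]
          · exact absurd hb1B hu
          · rcases hmem with h | h
            · exfalso
              rw [Set.mem_singleton_iff] at h
              simp only [LL, Sum.inr.injEq] at h
              exact hpb (congrArg Sigma.fst h).symm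
            · exact absurd ⟨m - 1, by omega, rfl⟩ (hbig_out _ h)
        exact win_rule3_pair (isWC_leaf hCpB hpj) hbigIsWC hne
          (forceIn_leaf hCpB hpj) f2 f3 hrec_leaf hrec_next hrec_next
    · -- all leaves of blue parents are blue : plain rule 2
      push_neg at hwl
      refine Win.rule2 B (k - 1) (CC n k b) (CC n k next)
        ⟨hbB, hnextW, trivial, hadj_b_next, ?_⟩ hrec_next
      intro u hadj hu _
      rw [adj_C_iff hn2] at hadj
      rcases hadj with rfl | rfl | ⟨j, rfl⟩
      · rw [hb1]
      · exact absurd hb1B hu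
      · exact absurd (hwl b j ⟨m - 1, by omega, rfl⟩) hu

end Upper2
end ZqGame
namespace ZqGame
open Classical
section Upper3
variable {n k : ℕ} [NeZero n]

local notation "G" => catCycle n (fun _ => k)
local notation "V'" => CatVert n (fun _ => k)

lemma upper_bound (hn : 3 ≤ n) (hk : 1 ≤ k) : Win G 1 (∅ : Set V') (k + 1) := by
  have hmid : Win G 1 (insert (CC n k 1) (insert (CC n k 0) ∅)) (k - 1) := by
    refine midgame hn hk (wcount _) _ 0 2 le_rfl (by omega) ?_ ?_ le_rfl
    · intro i
      constructor
      · rintro (h | h | h)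
        · have : i = 1 := by injection h
          exact ⟨1, by omega, by simp [this]⟩
        · have : i = 0 := by injection h
          exact ⟨0, by omega, by simp [this]⟩
        · exact absurd h (Set.notMem_empty _)
      · rintro ⟨s, hs, rfl⟩
        match s, hs with
        | 0, _ => exact Or.inr (Or.inl (by simp))
        | 1, _ => exact Or.inl (by simp)
    · intro i j hij
      rcases hij with h | h | h
      · exact absurd h (by simp [CC, LL])
      · exact absurd h (by simp [CC, LL])
      · exact absurd h (Set.notMem_empty _)
  have h1 : Win G 1 (insert (CC n k 0) ∅) k := by
    have := Win.rule1 _ (k - 1) (CC n k 1) hmid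
    rwa [show k - 1 + 1 = k by omega] at this
  have h0 := Win.rule1 _ k (CC n k 0) h1
  exact h0

end Upper3
end ZqGame
namespace ZqGame
open Classical
set_option linter.unusedVariables false
section Lower
variable {n k : ℕ} [NeZero n]

local notation "G" => catCycle n (fun _ => k)
local notation "V'" => CatVert n (fun _ => k)

/-- number of white leaves at cycle vertex `i` -/
noncomputable def mcount (B : Set V') (i : Fin n) : ℕ :=
  (Finset.univ.filter fun j : Fin k => LL n k i j ∉ B).card

def Touched (B : Set V') (i : Fin n) : Prop :=
  CC n k i ∈ B ∨ ∃ j, LL n k i j ∈ B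

noncomputable def tcount (B : Set V') : ℕ :=
  (Finset.univ.filter fun i : Fin n => Touched B i).card

/-- the lower-bound potential -/
noncomputable def phi (B : Set V') : ℕ :=
  (Finset.univ.sup fun i => mcount B i - 1) + (2 - min (tcount B) 2)

lemma mcount_le_k (B : Set V') (i : Fin n) : mcount B i ≤ k := by
  calc mcount B i ≤ (Finset.univ : Finset (Fin k)).card := Finset.card_filter_le _ _
    _ = k := by simp

lemma sup_le_k1 (B : Set V') : (Finset.univ.sup fun i => mcount B i - 1) ≤ k - 1 :=
  Finset.sup_le fun i _ => by have := mcount_le_k B i; omega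

lemma mcount_insert_le (B : Set V') (v : V') (i : Fin n) :
    mcount (insert v B) i ≤ mcount B i := by
  apply Finset.card_le_card
  intro j hj
  simp only [Finset.mem_filter, Finset.mem_univ, true_and, Set.mem_insert_iff] at hj ⊢
  exact fun h => hj (Or.inr h)

lemma mcount_le_insert (B : Set V') (v : V') (i : Fin n) :
    mcount B i ≤ mcount (insert v B) i + 1 := by
  classical
  have hsub : (Finset.univ.filter fun j : Fin k => LL n k i j ∉ B) ⊆
      (Finset.univ.filter fun j : Fin k => LL n k i j ∉ insert v B) ∪
      (Finset.univ.filter fun j : Fin k => LL n k i j = v) := by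
    intro j hj
    simp only [Finset.mem_filter, Finset.mem_univ, true_and, Finset.mem_union,
      Set.mem_insert_iff] at hj ⊢
    by_cases hv : LL n k i j = v
    · exact Or.inr hv
    · exact Or.inl fun h => h.elim hv hj
  have hcard1 : (Finset.univ.filter fun j : Fin k => LL n k i j = v).card ≤ 1 := by
    apply Finset.card_le_one.2
    intro a ha b hb
    simp only [Finset.mem_filter, Finset.mem_univ, true_and] at ha hb
    have : LL n k i a = LL n k i b := ha.trans hb.symm
    simpa [LL] using this
  refine le_trans (le_trans (Finset.card_le_card hsub) (Finset.card_union_le _ _)) ?_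
  have he : (Finset.univ.filter fun j : Fin k => LL n k i j ∉ insert v B).card
      = mcount (insert v B) i := by
    unfold mcount
    congr!
  rw [he]
  exact Nat.add_le_add_left hcard1 _

lemma mcount_insert_eq_of_ne (B : Set V') (v : V') (i : Fin n)
    (h : ∀ j, v ≠ LL n k i j) : mcount (insert v B) i = mcount B i := by
  unfold mcount
  congr 1
  ext j
  simp only [Finset.mem_filter, Finset.mem_univ, true_and, Set.mem_insert_iff, not_or]
  constructor
  · exact fun hj => hj.2
  · exact fun hj => ⟨fun he => h j he.symm, hj⟩

lemma tcount_mono (B : Set V') (v : V') : tcount B ≤ tcount (insert v B) := by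
  apply Finset.card_le_card
  intro i hi
  simp only [Finset.mem_filter, Finset.mem_univ, true_and] at hi ⊢
  rcases hi with h | ⟨j, hj⟩
  · exact Or.inl (Set.mem_insert_of_mem _ h)
  · exact Or.inr ⟨j, Set.mem_insert_of_mem _ hj⟩

lemma tcount_insert_le (B : Set V') (v : V') :
    tcount (insert v B) ≤ tcount B + 1 := by
  have hsub : (Finset.univ.filter fun i : Fin n => Touched (insert v B) i) ⊆
      (Finset.univ.filter fun i : Fin n => Touched B i) ∪ {idx v} := by
    intro i hi
    simp only [Finset.mem_filter, Finset.mem_univ, true_and, Finset.mem_union,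
      Finset.mem_singleton] at hi ⊢
    rcases hi with h | ⟨j, hj⟩
    · rcases h with h | h
      · right
        rw [← h]
        rfl
      · exact Or.inl (Or.inl h)
    · rcases hj with h | h
      · right
        rw [← h]
        rfl
      · exact Or.inl (Or.inr ⟨j, h⟩)
  have h1 := Finset.card_le_card hsub
  have h2 := Finset.card_union_le
    (Finset.univ.filter fun i : Fin n => Touched B i) ({idx v} : Finset (Fin n))
  simp only [tcount, Finset.card_singleton] at *
  omega

lemma untouched_mcount {B : Set V'} {i : Fin n} (h : ¬ Touched B i) :
    mcount B i = k := by
  have : (Finset.univ.filter fun j : Fin k => LL n k i j ∉ B) = Finset.univ := by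
    apply Finset.filter_true_of_mem
    intro j _ hj
    exact h (Or.inr ⟨j, hj⟩)
  rw [mcount, this]
  simp

lemma exists_untouched {B : Set V'} (h : tcount B < n) : ∃ i, ¬ Touched B i := by
  by_contra hc
  push_neg at hc
  have : (Finset.univ.filter fun i : Fin n => Touched B i) = Finset.univ :=
    Finset.filter_true_of_mem fun i _ => hc i
  rw [tcount, this] at h
  simp at h

end Lower
end ZqGame
namespace ZqGame
open Classical
set_option linter.unusedVariables false
section Lower2
variable {n k : ℕ} [NeZero n]

local notation "G" => catCycle n (fun _ => k)
local notation "V'" => CatVert n (fun _ => k)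

lemma two_ne_zero_fin (hn : 3 ≤ n) : (2 : Fin n) ≠ 0 := by
  intro h
  have h2 : ((2 : ℕ) : Fin n) = ((0 : ℕ) : Fin n) := by
    push_cast
    simpa using h
  have := natCast_inj_of_lt (by omega) (by omega) h2
  omega

/-- From any white cycle vertex `≠ i0`, one can reach a white neighbor of `C i0`
inside the white graph, provided `B` only contains vertices with index `i0`. -/
lemma reach_pred {B : Set V'} (hn2 : 2 ≤ n) {i i0 : Fin n} (hii0 : i ≠ i0)
    (hBC : ∀ r : Fin n, r ≠ i0 → CC n k r ∉ B) :
    ∃ u, Relation.ReflTransGen (WRel G B) (CC n k i) u ∧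
      (G).Adj (CC n k i0) u ∧ u ∉ B := by
  set v0 : ℕ := (i0 - i).val with hv0
  have hv0pos : 0 < v0 := by
    rw [hv0]
    rcases Nat.eq_zero_or_pos (i0 - i).val with h | h
    · exfalso
      have : i0 - i = 0 := by
        ext
        simpa using h
      rw [sub_eq_zero] at this
      exact hii0 this.symm
    · exact h
  have hv0lt : v0 < n := (i0 - i).isLt
  have hstep : ∀ r : ℕ, r ≤ v0 - 1 → i + (r : Fin n) ≠ i0 := by
    intro r hr heq
    have h1 : (r : Fin n) = i0 - i := by
      rw [← heq]
      ring
    have h2 : ((r : ℕ) : Fin n) = ((v0 : ℕ) : Fin n) := by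
      rw [h1, hv0, Fin.cast_val_eq_self]
    have := natCast_inj_of_lt (by omega) (by omega) h2
    omega
  have hchain := chain_walk (B := B) i hn2 (v0 - 1)
    (fun r hr => hBC _ (hstep r hr))
  have hend : i + ((v0 - 1 : ℕ) : Fin n) = i0 - 1 := by
    have : ((v0 - 1 : ℕ) : Fin n) = (i0 - i) - 1 := by
      rw [Nat.cast_sub (by omega), Fin.cast_val_eq_self]
      simp
    rw [this]
    ring
  rw [hend] at hchain
  have hne : i0 - 1 ≠ i0 := by
    intro h
    rw [sub_eq_self] at h
    exact one_ne_zero_fin hn2 h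
  refine ⟨CC n k (i0 - 1), hchain, ?_, hBC _ hne⟩
  have := adj_C_succ (n := n) (k := k) hn2 (i0 - 1)
  rw [sub_add_cancel] at this
  exact this.symm

/-- When no cycle vertex is blue, all cycle vertices are white-connected. -/
lemma reach_cycle {B : Set V'} (hn2 : 2 ≤ n) (hBC : ∀ r : Fin n, CC n k r ∉ B)
    (i i0 : Fin n) :
    Relation.ReflTransGen (WRel G B) (CC n k i) (CC n k i0) := by
  have hchain := chain_walk (B := B) i hn2 (i0 - i).val (fun r hr => hBC _)
  rw [Fin.cast_val_eq_self, add_sub_cancel] at hchain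
  exact hchain

end Lower2
end ZqGame
namespace ZqGame
open Classical
set_option linter.unusedVariables false
section Lower3
variable {n k : ℕ} [NeZero n]

local notation "G" => catCycle n (fun _ => k)
local notation "V'" => CatVert n (fun _ => k)

lemma tcount_eq_of_touched_insert {B : Set V'} {v : V'}
    (h : Touched B (idx v)) : tcount (insert v B) = tcount B := by
  rw [tcount, tcount]
  congr 1
  ext i
  simp only [Finset.mem_filter, Finset.mem_univ, true_and]
  constructor
  · rintro (hc | ⟨j, hj⟩)
    · rcases hc with hc | hc
      · rw [show i = idx v by rw [← hc]; rfl]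
        exact h
      · exact Or.inl hc
    · rcases hj with hj | hj
      · rw [show i = idx v by rw [← hj]; rfl]
        exact h
      · exact Or.inr ⟨j, hj⟩
  · rintro (hc | ⟨j, hj⟩)
    · exact Or.inl (Set.mem_insert_of_mem _ hc)
    · exact Or.inr ⟨j, Set.mem_insert_of_mem _ hj⟩

lemma two_le_tcount_of_pair {B : Set V'} {i1 i2 : Fin n} (h12 : i1 ≠ i2)
    (h1 : Touched B i1) (h2 : Touched B i2) : 2 ≤ tcount B := by
  have hsub : ({i1, i2} : Finset (Fin n)) ⊆
      Finset.univ.filter fun i : Fin n => Touched B i := by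
    intro x hx
    simp only [Finset.mem_insert, Finset.mem_singleton] at hx
    simp only [Finset.mem_filter, Finset.mem_univ, true_and]
    rcases hx with rfl | rfl
    · exact h1
    · exact h2
  calc 2 = ({i1, i2} : Finset (Fin n)).card := (Finset.card_pair h12).symm
    _ ≤ _ := Finset.card_le_card hsub

theorem phi_le (hn : 3 ≤ n) (hk : 1 ≤ k) {B : Set V'} {t : ℕ}
    (h : Win G 1 B t) : phi B ≤ t := by
  have hn2 : 2 ≤ n := by omega
  induction h with
  | all B t hB =>
    have hm : ∀ i, mcount B i = 0 := by
      intro i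
      rw [mcount, Finset.card_eq_zero, Finset.filter_eq_empty_iff]
      intro j _
      simp only [not_not]
      exact hB _
    have ht : tcount B = n := by
      have hft : (Finset.univ.filter fun i : Fin n => Touched B i) = Finset.univ :=
        Finset.filter_true_of_mem fun i _ => Or.inl (hB _)
      rw [tcount, hft]
      simp
    rw [phi, ht]
    have hsup : (Finset.univ.sup fun i => mcount B i - 1) = 0 := by
      apply Nat.le_zero.1
      apply Finset.sup_le
      intro i _
      rw [hm i]
    rw [hsup]
    simp [min_eq_right (show 2 ≤ n by omega)]
  | rule1 B t v hwin ih =>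
    by_cases htc : 2 ≤ tcount B
    · have hsup : (Finset.univ.sup fun i => mcount B i - 1) ≤
          (Finset.univ.sup fun i => mcount (insert v B) i - 1) + 1 := by
        apply Finset.sup_le
        intro i _
        have h1 := mcount_le_insert B v i
        have h2 : mcount (insert v B) i - 1 ≤
            Finset.univ.sup fun i => mcount (insert v B) i - 1 :=
          Finset.le_sup (f := fun i => mcount (insert v B) i - 1) (Finset.mem_univ i)
        omega
      have hmin : min (tcount B) 2 = 2 := min_eq_right htc
      rw [phi, hmin]
      rw [phi] at ih
      omega
    · push_neg at htc
      have htc' : tcount (insert v B) < n := by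
        have := tcount_insert_le B v
        omega
      obtain ⟨i1, hi1⟩ := exists_untouched htc'
      have hsup' : k - 1 ≤ Finset.univ.sup fun i => mcount (insert v B) i - 1 := by
        have h1 : mcount (insert v B) i1 = k := untouched_mcount hi1
        have h2 : mcount (insert v B) i1 - 1 ≤
            Finset.univ.sup fun i => mcount (insert v B) i - 1 :=
          Finset.le_sup (f := fun i => mcount (insert v B) i - 1) (Finset.mem_univ i1)
        omega
      have hsupB := sup_le_k1 B
      have htmono := tcount_mono B v
      have htle := tcount_insert_le B v
      rw [phi] at ih ⊢
      have hminle : min (tcount (insert v B)) 2 + 1 ≥ min (tcount B) 2 := by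
        rcases le_or_gt 2 (tcount (insert v B)) with h | h
        · rw [min_eq_right h]; omega
        · rw [min_eq_left (by omega), min_eq_left (by omega)]; omega
      omega
  | rule2 B t v w hf hwin ih =>
    obtain ⟨hvB, hwB, -, hadj, huniq⟩ := hf
    refine le_trans ?_ ih
    obtain i0 | ⟨i0, j0⟩ := w
    ·
      have hsup : (Finset.univ.sup fun i => mcount B i - 1) =
          (Finset.univ.sup fun i => mcount (insert (Sum.inl i0) B) i - 1) := by
        apply Finset.sup_congr rfl
        intro i _
        rw [mcount_insert_eq_of_ne B _ i (fun j => by simp [CC, LL])]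
      by_cases hti : Touched B i0
      · have := tcount_eq_of_touched_insert (B := B) (v := Sum.inl i0) hti
        rw [phi, phi, hsup, this]
      · -- the forcing vertex and its far neighbor are both touched
        have h2 : 2 ≤ tcount B := by
          have hadj' : (G).Adj (CC n k i0) v := hadj.symm
          rw [adj_C_iff hn2] at hadj'
          rcases hadj' with rfl | rfl | ⟨j, rfl⟩
          · -- v = C (i0+1), other nbr C (i0+2)
            have hnb : CC n k (i0 + 1 + 1) ∈ B := by
              by_contra hnb
              have := huniq _ (adj_C_succ hn2 (i0 + 1)) hnb trivial
              have h2 : i0 + 1 + 1 = i0 := by injection this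
              apply two_ne_zero_fin hn
              have := congrArg (fun x => x - i0) h2
              calc (2 : Fin n) = i0 + 1 + 1 - i0 := by ring
                _ = 0 := by rw [h2]; simp
            refine two_le_tcount_of_pair (i1 := i0 + 1) (i2 := i0 + 1 + 1) ?_
              (Or.inl hvB) (Or.inl hnb)
            intro h
            exact one_ne_zero_fin hn2 (by
              have := congrArg (fun x => x - (i0 + 1)) h
              simpa using this.symm)
          · -- v = C (i0-1), other nbr C (i0-2)
            have hadj2 : (G).Adj (CC n k (i0 - 1)) (CC n k (i0 - 1 - 1)) := by
              have := adj_C_succ (n := n) (k := k) hn2 (i0 - 1 - 1)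
              rw [sub_add_cancel] at this
              exact this.symm
            have hnb : CC n k (i0 - 1 - 1) ∈ B := by
              by_contra hnb
              have := huniq _ hadj2 hnb trivial
              have h2 : i0 - 1 - 1 = i0 := by injection this
              apply two_ne_zero_fin hn
              have : (0 : Fin n) - 2 = 0 := by
                calc (0 : Fin n) - 2 = i0 - 1 - 1 - i0 := by ring
                  _ = 0 := by rw [h2]; simp
              have h3 := congrArg (fun x => x + 2 - 0) this
              simp only [sub_add_cancel, zero_add] at h3
              simpa using h3.symm
            refine two_le_tcount_of_pair (i1 := i0 - 1) (i2 := i0 - 1 - 1) ?_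
              (Or.inl hvB) (Or.inl hnb)
            intro h
            exact one_ne_zero_fin hn2 (by
              have := congrArg (fun x => i0 - 1 - x) h
              simpa using this)
          · exact absurd (Or.inr ⟨j, hvB⟩) hti
        have h2' : 2 ≤ tcount (insert (Sum.inl i0) B) :=
          le_trans h2 (tcount_mono _ _)
        rw [phi, phi, hsup, min_eq_right h2, min_eq_right h2']
    · have hveq : v = CC n k i0 := by
        have hadj' : (G).Adj (LL n k i0 j0) v := hadj.symm
        rwa [adj_L_iff] at hadj'
      subst hveq
      have hti : Touched B i0 := Or.inl hvB
      have htc := tcount_eq_of_touched_insert (B := B) (v := LL n k i0 j0) hti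
      have hm1 : mcount B i0 = 1 := by
        rw [mcount, Finset.card_eq_one]
        refine ⟨j0, ?_⟩
        ext j
        simp only [Finset.mem_filter, Finset.mem_univ, true_and, Finset.mem_singleton]
        constructor
        · intro hj
          have := huniq _ (adj_CL i0 j) hj trivial
          simp only [LL, Sum.inr.injEq, Sigma.mk.inj_iff, heq_eq_eq, true_and] at this
          exact this
        · rintro rfl
          exact hwB
      have hsup : (Finset.univ.sup fun i => mcount B i - 1) =
          (Finset.univ.sup fun i => mcount (insert (LL n k i0 j0) B) i - 1) := by
        apply Finset.sup_congr rfl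
        intro i _
        by_cases hii : i = i0
        · rw [hii]
          have hle := mcount_insert_le B (LL n k i0 j0) i0
          omega
        · rw [mcount_insert_eq_of_ne B _ i (fun j => by
            simp only [LL, ne_eq, Sum.inr.injEq, Sigma.mk.inj_iff]
            exact fun hc => hii hc.1.symm)]
      rw [phi, phi, hsup, htc]
  | rule3 B t 𝒲 vf wf hWC hcard hforce hwin ih =>
    obtain ⟨W₁, hW₁, W₂, hW₂, hWne⟩ := Finset.one_lt_card.1 (by omega : 1 < 𝒲.card)
    have hsUpair : ⋃₀ (({W₁, W₂} : Finset (Set V')) : Set (Set V')) = W₁ ∪ W₂ := by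
      simp
    have hpairsub : ({W₁, W₂} : Finset (Set V')) ⊆ 𝒲 := by
      rw [Finset.insert_subset_iff, Finset.singleton_subset_iff]
      exact ⟨hW₁, hW₂⟩
    -- Step A : at least two touched cycle vertices
    have htc : 2 ≤ tcount B := by
      by_contra htc
      push_neg at htc
      have hpair := hforce {W₁, W₂} hpairsub ⟨W₁, by simp⟩
      rw [hsUpair] at hpair
      obtain ⟨hvB, hwB, hwmem, hadj, huniq⟩ := hpair
      have hBsub : ∀ x ∈ B, Touched B (idx x) := by
        intro x hx
        match x with
        | Sum.inl i => exact Or.inl hx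
        | Sum.inr ⟨i, j⟩ => exact Or.inr ⟨j, hx⟩
      rcases (by omega : tcount B = 0 ∨ tcount B = 1) with h0 | h1
      · -- B empty
        rw [tcount, Finset.card_eq_zero, Finset.filter_eq_empty_iff] at h0
        exact h0 (Finset.mem_univ (idx (vf {W₁, W₂}))) (hBsub _ hvB)
      · rw [tcount, Finset.card_eq_one] at h1
        obtain ⟨i0, hi0⟩ := h1
        have htouch : ∀ i, Touched B i → i = i0 := by
          intro i hi
          have : i ∈ Finset.univ.filter fun i : Fin n => Touched B i := by
            simp only [Finset.mem_filter, Finset.mem_univ, true_and]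
            exact hi
          rw [hi0, Finset.mem_singleton] at this
          exact this
        have hBonly : ∀ x ∈ B, idx x = i0 := fun x hx => htouch _ (hBsub x hx)
        by_cases hc0 : CC n k i0 ∈ B
        · -- every white component contains a white neighbor of C i0
          have hBC : ∀ r : Fin n, r ≠ i0 → CC n k r ∉ B := by
            intro r hr hmem
            exact hr (hBonly _ hmem)
          have hnbr : ∀ w : V', w ∉ B → ∃ u, u ∈ WhiteComp G B w ∧
              (G).Adj (CC n k i0) u ∧ u ∉ B := by
            intro w hw
            match w with
            | Sum.inl i =>
              have hii0 : i ≠ i0 := fun h => hw (h ▸ hc0)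
              exact reach_pred hn2 hii0 hBC
            | Sum.inr ⟨i, j⟩ =>
              by_cases hii0 : i = i0
              · subst hii0
                exact ⟨_, mem_whiteComp_self _, adj_CL i j, hw⟩
              · have hCi : CC n k i ∉ B := hBC i hii0
                obtain ⟨u, hu1, hu2, hu3⟩ := reach_pred hn2 hii0 hBC
                refine ⟨u, ?_, hu2, hu3⟩
                exact Relation.ReflTransGen.head ⟨(adj_CL i j).symm, hw, hCi⟩ hu1
          obtain ⟨w₁, hw₁, heq₁⟩ := hWC W₁ hW₁
          obtain ⟨w₂, hw₂, heq₂⟩ := hWC W₂ hW₂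
          obtain ⟨u₁, hu₁m, hu₁a, hu₁B⟩ := hnbr w₁ hw₁
          obtain ⟨u₂, hu₂m, hu₂a, hu₂B⟩ := hnbr w₂ hw₂
          have hu₁W : u₁ ∈ W₁ := heq₁ ▸ hu₁m
          have hu₂W : u₂ ∈ W₂ := heq₂ ▸ hu₂m
          have hu12 : u₁ ≠ u₂ := by
            intro h
            exact isWhiteComp_disjoint (hWC W₁ hW₁) (hWC W₂ hW₂) hWne
              (h ▸ hu₁W) hu₂W
          -- vf is C i0 or a leaf of i0
          match hvf : vf {W₁, W₂} with
          | Sum.inl i =>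
            have : i = i0 := by
              have := hBonly _ (hvf ▸ hvB)
              simpa [idx] using this
            subst this
            rw [hvf] at huniq
            exact hu12 ((huniq u₁ hu₁a hu₁B (Or.inl hu₁W)).trans
              (huniq u₂ hu₂a hu₂B (Or.inr hu₂W)).symm)
          | Sum.inr ⟨i, j⟩ =>
            rw [hvf] at hadj
            rw [adj_L_iff] at hadj
            have : i = i0 := by
              have := hBonly _ (hvf ▸ hvB)
              simpa [idx] using this
            subst this
            exact (hadj ▸ hwB) hc0
        · -- no cycle vertex blue : all whites in a single component
          have hBC : ∀ r : Fin n, CC n k r ∉ B := by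
            intro r hr
            have := htouch r (Or.inl hr)
            subst this
            exact hc0 hr
          have hcompeq : ∀ w : V', w ∉ B →
              WhiteComp G B w = WhiteComp G B (CC n k i0) := by
            intro w hw
            match w with
            | Sum.inl i =>
              exact whiteComp_eq_of_mem (reach_cycle hn2 hBC i i0)
            | Sum.inr ⟨i, j⟩ =>
              apply whiteComp_eq_of_mem
              exact Relation.ReflTransGen.head ⟨(adj_CL i j).symm, hw, hBC i⟩
                (reach_cycle hn2 hBC i i0)
          obtain ⟨w₁, hw₁, heq₁⟩ := hWC W₁ hW₁
          obtain ⟨w₂, hw₂, heq₂⟩ := hWC W₂ hW₂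
          exact hWne (by rw [heq₁, heq₂, hcompeq w₁ hw₁, hcompeq w₂ hw₂])
    -- Step B : concentrate on the max vertex
    have hminB : min (tcount B) 2 = 2 := min_eq_right htc
    by_cases hM : (Finset.univ.sup fun i => mcount B i - 1) = 0
    · rw [phi, hM, hminB]
      omega
    · haveI : Nonempty (Fin n) := ⟨⟨0, by omega⟩⟩
      obtain ⟨q, -, hq⟩ := Finset.exists_mem_eq_sup Finset.univ
        Finset.univ_nonempty (fun i => mcount B i - 1)
      have hq2 : 2 ≤ mcount B q := by omega
      -- at most one component contains a white leaf of q
      have hbad : ∀ W ∈ 𝒲, ∀ W' ∈ 𝒲, W ≠ W' → (∃ j, LL n k q j ∈ W) →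
          (∃ j, LL n k q j ∈ W') → False := by
        intro W hW W' hW' hne ⟨j₁, hj₁⟩ ⟨j₂, hj₂⟩
        obtain ⟨w₁, hw₁, heq₁⟩ := hWC W hW
        obtain ⟨w₂, hw₂, heq₂⟩ := hWC W' hW'
        have hl₁B : LL n k q j₁ ∉ B := whiteComp_not_mem_B hw₁ (heq₁ ▸ hj₁)
        have hl₂B : LL n k q j₂ ∉ B := whiteComp_not_mem_B hw₂ (heq₂ ▸ hj₂)
        by_cases hcq : CC n k q ∈ B
        · have hWs : W = {LL n k q j₁} := by
            rw [heq₁, whiteComp_eq_of_mem (heq₁ ▸ hj₁ : LL n k q j₁ ∈ WhiteComp G B w₁),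
              whiteComp_leaf_singleton hcq hl₁B]
          have hWs' : W' = {LL n k q j₂} := by
            rw [heq₂, whiteComp_eq_of_mem (heq₂ ▸ hj₂ : LL n k q j₂ ∈ WhiteComp G B w₂),
              whiteComp_leaf_singleton hcq hl₂B]
          have hjne : LL n k q j₁ ≠ LL n k q j₂ := by
            intro h
            apply hne
            rw [hWs, hWs', h]
          have hsub2 : ({W, W'} : Finset (Set V')) ⊆ 𝒲 := by
            rw [Finset.insert_subset_iff, Finset.singleton_subset_iff]
            exact ⟨hW, hW'⟩
          have hp := hforce {W, W'} hsub2 ⟨W, by simp⟩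
          rw [show ⋃₀ (({W, W'} : Finset (Set V')) : Set (Set V')) = W ∪ W' by simp]
            at hp
          obtain ⟨hvB, hwB, hwmem, hadj, huniq⟩ := hp
          have hxval : wf {W, W'} = LL n k q j₁ ∨ wf {W, W'} = LL n k q j₂ := by
            rcases hwmem with hm | hm
            · exact Or.inl (by have := (Set.ext_iff.1 hWs _).1 hm; simpa using this)
            · exact Or.inr (by have := (Set.ext_iff.1 hWs' _).1 hm; simpa using this)
          have hvCq : vf {W, W'} = CC n k q := by
            rcases hxval with h | h
            · rw [h, SimpleGraph.adj_comm, adj_L_iff] at hadj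
              exact hadj
            · rw [h, SimpleGraph.adj_comm, adj_L_iff] at hadj
              exact hadj
          rw [hvCq] at huniq
          have h1 := huniq (LL n k q j₁) (adj_CL q j₁) hl₁B
            (Or.inl (by rw [hWs]; exact rfl))
          have h2 := huniq (LL n k q j₂) (adj_CL q j₂) hl₂B
            (Or.inr (by rw [hWs']; exact rfl))
          exact hjne (h1.trans h2.symm)
        · -- C q white : both leaves in the same component
          apply hne
          rw [heq₁, heq₂,
            whiteComp_eq_of_mem (heq₁ ▸ hj₁ : LL n k q j₁ ∈ WhiteComp G B w₁),
            whiteComp_eq_of_mem (heq₂ ▸ hj₂ : LL n k q j₂ ∈ WhiteComp G B w₂)]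
          have s₁ : Relation.ReflTransGen (WRel G B) (LL n k q j₁) (CC n k q) :=
            Relation.ReflTransGen.single ⟨(adj_CL q j₁).symm, hl₁B, hcq⟩
          have s₂ : Relation.ReflTransGen (WRel G B) (LL n k q j₂) (CC n k q) :=
            Relation.ReflTransGen.single ⟨(adj_CL q j₂).symm, hl₂B, hcq⟩
          rw [whiteComp_eq_of_mem s₁, whiteComp_eq_of_mem s₂]
      -- pick a component avoiding white leaves of q
      have hpick : ∃ W ∈ 𝒲, ¬ ∃ j, LL n k q j ∈ W := by
        by_cases h1 : ∃ j, LL n k q j ∈ W₁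
        · exact ⟨W₂, hW₂, fun h2 => hbad W₁ hW₁ W₂ hW₂ hWne h1 h2⟩
        · exact ⟨W₁, hW₁, h1⟩
      obtain ⟨Ws, hWs, hWsgood⟩ := hpick
      have hfs := hforce {Ws} (Finset.singleton_subset_iff.2 hWs)
        ⟨Ws, Finset.mem_singleton_self Ws⟩
      rw [show ⋃₀ (({Ws} : Finset (Set V')) : Set (Set V')) = Ws by simp] at hfs
      obtain ⟨-, hwB, hwmem, -, -⟩ := hfs
      have hwnotleaf : ∀ j, wf {Ws} ≠ LL n k q j :=
        fun j he => hWsgood ⟨j, he ▸ hwmem⟩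
      have hih := ih {Ws} (Finset.singleton_subset_iff.2 hWs)
        ⟨Ws, Finset.mem_singleton_self Ws⟩
      refine le_trans ?_ hih
      have hm : mcount (insert (wf {Ws}) B) q = mcount B q :=
        mcount_insert_eq_of_ne B _ q hwnotleaf
      have hsup' : mcount B q - 1 ≤
          Finset.univ.sup fun i => mcount (insert (wf {Ws}) B) i - 1 := by
        have hle := Finset.le_sup (f := fun i => mcount (insert (wf {Ws}) B) i - 1)
          (Finset.mem_univ q)
        change mcount (insert (wf {Ws}) B) q - 1 ≤ _ at hle
        omega
      have htc' : 2 ≤ tcount (insert (wf {Ws}) B) := le_trans htc (tcount_mono _ _)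
      have hqeq : (Finset.univ.sup fun i => mcount B i - 1) = mcount B q - 1 := by
        rw [hq]
      rw [phi, phi, hminB, min_eq_right htc', hqeq]
      omega

end Lower3
end ZqGame
namespace ZqGame
open Classical
section Final
variable {n k : ℕ} [NeZero n]

local notation "V'" => CatVert n (fun _ => k)

lemma phi_empty (hn : 3 ≤ n) (hk : 1 ≤ k) : phi (∅ : Set V') = k + 1 := by
  haveI : Nonempty (Fin n) := ⟨⟨0, by omega⟩⟩
  have hm : ∀ i : Fin n, mcount (∅ : Set V') i = k := by
    intro i
    have h1 : mcount (∅ : Set V') i ≤ k := mcount_le_k _ _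
    have h2 : k ≤ mcount (∅ : Set V') i := by
      have hle : (Finset.univ : Finset (Fin k)).card ≤ mcount (∅ : Set V') i := by
        unfold mcount
        apply Finset.card_le_card
        intro j hj
        simp
      simpa using hle
    omega
  have hsup : (Finset.univ.sup fun i : Fin n => mcount (∅ : Set V') i - 1) = k - 1 := by
    have : (fun i : Fin n => mcount (∅ : Set V') i - 1) = fun _ => k - 1 := by
      funext i
      rw [hm i]
    rw [this, Finset.sup_const Finset.univ_nonempty]
  have ht : tcount (∅ : Set V') = 0 := by
    rw [tcount, Finset.card_eq_zero, Finset.filter_eq_empty_iff]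
    rintro i - (h | ⟨j, h⟩)
    · exact Set.notMem_empty _ h
    · exact Set.notMem_empty _ h
  rw [phi, hsup, ht]
  simp
  omega

end Final
end ZqGame

open SimpleGraph

/-- For the corona `C_n ∘ k K_1` (each cycle vertex receives exactly `k` pendant
leaves), with `n ≥ 3` and `k ≥ 1`, we have `Z_1(C_n ∘ k K_1) = k + 1`. -/
theorem Z1_corona_cycle (n k : ℕ) (hn : 3 ≤ n) (hk : 1 ≤ k) :
    ZqGame.Zq (ZqGame.catCycle n (fun _ => k)) 1 = k + 1 := by
  haveI : NeZero n := ⟨by omega⟩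
  rw [ZqGame.Zq, ZqGame.cost]
  apply le_antisymm
  · exact Nat.sInf_le (ZqGame.upper_bound hn hk)
  · apply le_csInf ⟨k + 1, ZqGame.upper_bound hn hk⟩
    intro t ht
    have := ZqGame.phi_le hn hk ht
    rwa [ZqGame.phi_empty hn hk] at this
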